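/- Let R be a commutative ring, n ≥ 1, B ∈ Mₙ(R), and i,j ∈ {1,…,n}. Let T_{ij} = Iₙ + E_{ij}, where E_{ij} is the matrix with a single entry 1 in position (i,j) and 0 elsewhere. Then for all p, q ∈ ℕⁿ with Σₐ pₐ = Σ_b q_b: P_{p,q}(B·T_{ij}) = Σ_{k=0}^{q_j} binom(q_j, k)·P_{p, q + k(e_i − e_j)}(B), where e_i ∈ ℤⁿ is the i-th standard basis vector. -/

import Mathlib

open scoped Classical

noncomputable section

/-- The permanent of a square matrix. -/
def permanent {m : ℕ} {R : Type*} [CommRing R] (A : Matrix (Fin m) (Fin m) R) : R :=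
  ∑ σ : Equiv.Perm (Fin m), ∏ a, A a (σ a)

/-- The weakly increasing list in which the value `i` appears exactly `p i` times. -/
def repList {n : ℕ} (p : Fin n → ℕ) : List (Fin n) :=
  (List.finRange n).flatMap fun i => List.replicate (p i) i

/-- `P_{p,q}(B)` for natural weight vectors: the permanent of the square matrix with
`(a,b)` entry `B (r a) (c b)`, where `r`, `c` are the weakly increasing functions with
multiplicities `p`, `q`. -/
def PpermNat {n : ℕ} {R : Type*} [CommRing R] (B : Matrix (Fin n) (Fin n) R)
    (p q : Fin n → ℕ) : R :=
  if h : (repList p).length = (repList q).length then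
    permanent (Matrix.of fun a b : Fin (repList p).length =>
      B ((repList p).get a) ((repList q).get (Fin.cast h b)))
  else 0

/-- `P_{p,q}(B)` for integer weight vectors; it vanishes if some entry is negative. -/
def Pperm {n : ℕ} {R : Type*} [CommRing R] (B : Matrix (Fin n) (Fin n) R)
    (p q : Fin n → ℤ) : R :=
  if (∀ i, 0 ≤ p i) ∧ (∀ j, 0 ≤ q j) then
    PpermNat B (fun i => (p i).toNat) (fun j => (q j).toNat)
  else 0

lemma countP_eq_sum' {α : Type*} (p : α → Bool) (L : List α) :
    L.countP p = (L.map fun a => if p a then 1 else 0).sum := by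
  induction L with
  | nil => simp
  | cons a L ih => by_cases h : p a <;> simp [List.countP_cons, h, ih, Nat.add_comm]

lemma card_filter_get' {α : Type*} [DecidableEq α] (l : List α) (x : α) :
    (Finset.univ.filter (fun b : Fin l.length => l.get b = x)).card = l.count x := by
  conv_rhs => rw [← List.map_get_finRange l]
  rw [List.count_eq_countP, List.countP_map, Finset.card_filter, Fin.sum_univ_def,
    countP_eq_sum']
  refine congrArg List.sum (List.map_congr_left fun a _ => ?_)
  simp [Function.comp_apply, beq_iff_eq]

lemma repList_length' {n : ℕ} (p : Fin n → ℕ) : (repList p).length = ∑ i, p i := by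
  simp only [repList, List.length_flatMap, Fin.sum_univ_def, Function.comp_def,
    List.length_replicate]

lemma repList_count' {n : ℕ} (q : Fin n → ℕ) (x : Fin n) : (repList q).count x = q x := by
  rw [repList, List.count_flatMap]
  simp only [Function.comp_def, List.count_replicate]
  rw [← Fin.sum_univ_def]
  simp

lemma card_filter_castfun {m m' : ℕ} (h : m = m') (P : Fin m' → Prop) :
    (Finset.univ.filter fun b : Fin m => P (Fin.cast h b)).card
      = (Finset.univ.filter P).card := by
  subst h; rfl

lemma card_filter_get_cast {α : Type*} [DecidableEq α] {m : ℕ} (l : List α) (h : m = l.length)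
    (x : α) :
    (Finset.univ.filter fun b : Fin m => l.get (Fin.cast h b) = x).card = l.count x := by
  subst h; exact card_filter_get' l x

def permFun {n m : ℕ} {R : Type*} [CommRing R] (B : Matrix (Fin n) (Fin n) R)
    (r c : Fin m → Fin n) : R :=
  ∑ σ : Equiv.Perm (Fin m), ∏ a, B (r a) (c (σ a))

lemma permanent_of_eq_permFun {n m : ℕ} {R : Type*} [CommRing R]
    (B : Matrix (Fin n) (Fin n) R) (r c : Fin m → Fin n) :
    permanent (Matrix.of fun a b => B (r a) (c b)) = permFun B r c := rfl

lemma permFun_congr {n m : ℕ} {R : Type*} [CommRing R] (B : Matrix (Fin n) (Fin n) R)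
    (r c c' : Fin m → Fin n)
    (h : ∀ x, (Finset.univ.filter fun b => c b = x).card
        = (Finset.univ.filter fun b => c' b = x).card) :
    permFun B r c = permFun B r c' := by
  have F : ∀ x, { b // c b = x } ≃ { b // c' b = x } := fun x =>
    Fintype.equivOfCardEq (by simp only [Fintype.card_subtype]; exact h x)
  obtain ⟨e, he⟩ : ∃ e : Equiv.Perm (Fin m), ∀ a, c' (e a) = c a :=
    ⟨Equiv.ofFiberEquiv F, fun a => Equiv.ofFiberEquiv_map F a⟩
  unfold permFun
  refine Fintype.sum_equiv (Equiv.mulLeft e) _ _ fun σ => ?_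
  refine Finset.prod_congr rfl fun a _ => ?_
  have : (Equiv.mulLeft e σ) a = e (σ a) := rfl
  rw [this, he]
open scoped Classical

lemma PpermNat_eq_permFun {n : ℕ} {R : Type*} [CommRing R] (B : Matrix (Fin n) (Fin n) R)
    (p q : Fin n → ℕ) (h : (repList p).length = (repList q).length) :
    PpermNat B p q = permFun B (repList p).get (fun b => (repList q).get (Fin.cast h b)) := by
  rw [PpermNat, dif_pos h, permanent_of_eq_permFun]

lemma permFun_eq_PpermNat {n : ℕ} {R : Type*} [CommRing R] (B : Matrix (Fin n) (Fin n) R)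
    (p : Fin n → ℕ) (c : Fin (repList p).length → Fin n) :
    permFun B (repList p).get c
      = PpermNat B p (fun x => (Finset.univ.filter fun b => c b = x).card) := by
  have h : (repList p).length
      = (repList (fun x => (Finset.univ.filter fun b => c b = x).card)).length := by
    conv_rhs => rw [repList_length']
    have := Finset.card_eq_sum_card_fiberwise
      (s := (Finset.univ : Finset (Fin (repList p).length))) (t := Finset.univ)
      (f := c) (fun x _ => Finset.mem_univ (c x))
    simpa using this
  rw [PpermNat_eq_permFun B p _ h]
  apply permFun_congr
  intro x
  rw [card_filter_get_cast _ h, repList_count']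

lemma perm_col_add {m : ℕ} {R : Type*} [CommRing R] (X Y Z : Matrix (Fin m) (Fin m) R)
    (b0 : Fin m)
    (h0 : ∀ a, X a b0 = Y a b0 + Z a b0)
    (h1 : ∀ a b, b ≠ b0 → X a b = Y a b)
    (h2 : ∀ a b, b ≠ b0 → X a b = Z a b) :
    permanent X = permanent Y + permanent Z := by
  unfold permanent
  rw [← Finset.sum_add_distrib]
  refine Finset.sum_congr rfl fun σ _ => ?_
  set a0 := σ.symm b0 with ha0def
  have ha0 : σ a0 = b0 := σ.apply_symm_apply b0
  have hne : ∀ a ∈ Finset.univ.erase a0, σ a ≠ b0 := by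
    intro a ha hc
    exact (Finset.mem_erase.1 ha).1 (by rw [ha0def, ← hc, Equiv.symm_apply_apply])
  have hXY : ∏ a ∈ Finset.univ.erase a0, X a (σ a) = ∏ a ∈ Finset.univ.erase a0, Y a (σ a) :=
    Finset.prod_congr rfl fun a ha => h1 a (σ a) (hne a ha)
  have hXZ : ∏ a ∈ Finset.univ.erase a0, X a (σ a) = ∏ a ∈ Finset.univ.erase a0, Z a (σ a) :=
    Finset.prod_congr rfl fun a ha => h2 a (σ a) (hne a ha)
  rw [← Finset.mul_prod_erase Finset.univ (fun a => X a (σ a)) (Finset.mem_univ a0),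
    ← Finset.mul_prod_erase Finset.univ (fun a => Y a (σ a)) (Finset.mem_univ a0),
    ← Finset.mul_prod_erase Finset.univ (fun a => Z a (σ a)) (Finset.mem_univ a0)]
  simp only [ha0]
  rw [h0 a0, add_mul, hXY]
  congr 1
  rw [hXY.symm.trans hXZ]

lemma perm_expand {m : ℕ} {R : Type*} [CommRing R] (v : Fin m → Fin m → R)
    (T : Finset (Fin m)) :
    ∀ N : Fin m → Fin m → R,
    permanent (Matrix.of fun a b => N a b + if b ∈ T then v a b else 0)
      = ∑ S ∈ T.powerset, permanent (Matrix.of fun a b => if b ∈ S then v a b else N a b) := by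
  induction T using Finset.induction_on with
  | empty => intro N; simp
  | @insert b0 T hb0 ih =>
    intro N
    have key := perm_col_add
      (Matrix.of fun a b => N a b + if b ∈ insert b0 T then v a b else 0)
      (Matrix.of fun a b => N a b + if b ∈ T then v a b else 0)
      (Matrix.of fun a b => (if b = b0 then v a b else N a b) + if b ∈ T then v a b else 0)
      b0
      (by intro a; simp [hb0])
      (by intro a b hb; simp [Finset.mem_insert, hb])
      (by intro a b hb; simp [Finset.mem_insert, hb])
    rw [key, ih N, ih (fun a b => if b = b0 then v a b else N a b),
      Finset.sum_powerset_insert hb0]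
    congr 1
    refine Finset.sum_congr rfl fun S hS => ?_
    congr 1
    ext a b
    by_cases h1 : b ∈ S <;> by_cases h2 : b = b0 <;>
      simp [Finset.mem_insert, h1, h2]

lemma mulT_apply {n : ℕ} {R : Type*} [CommRing R] (B : Matrix (Fin n) (Fin n) R)
    (i j x y : Fin n) :
    (B * (1 + Matrix.single i j (1 : R))) x y
      = B x y + if y = j then B x i else 0 := by
  rw [Matrix.mul_add, Matrix.mul_one, Matrix.add_apply]
  congr 1
  rw [Matrix.mul_apply]
  simp only [Matrix.single, Matrix.of_apply, mul_ite, mul_one, mul_zero]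
  by_cases hy : y = j
  · subst hy; simp
  · rw [if_neg hy, Finset.sum_eq_zero]
    intro z _
    rw [if_neg]
    rintro ⟨-, h⟩
    exact hy h.symm

/-- The effect of the elementary column transformation `T_{ij}` on the
permanent polynomials:
`P_{p,q}(B·T_{ij}) = Σ_{k=0}^{q_j} binom(q_j, k)·P_{p, q + k(e_i - e_j)}(B)`. -/
theorem stmt_10 {R : Type*} [CommRing R] (n : ℕ) (hn : 1 ≤ n)
    (B : Matrix (Fin n) (Fin n) R) (i j : Fin n) (p q : Fin n → ℕ)
    (hpq : ∑ a, p a = ∑ b, q b) :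
    Pperm (B * (1 + Matrix.single i j (1 : R)))
      (fun a => (p a : ℤ)) (fun b => (q b : ℤ))
    = ∑ k ∈ Finset.range (q j + 1),
        ((q j).choose k : R) *
          Pperm B (fun a => (p a : ℤ))
            (fun b => (q b : ℤ) + (k : ℤ) * ((if b = i then 1 else 0) - (if b = j then 1 else 0))) := by
  have h : (repList p).length = (repList q).length := by
    rw [repList_length', repList_length', hpq]
  set r : Fin (repList p).length → Fin n := (repList p).get with hr
  set c : Fin (repList p).length → Fin n := fun b => (repList q).get (Fin.cast h b) with hc
  have hcount : ∀ x, (Finset.univ.filter fun b => c b = x).card = q x := fun x => by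
    rw [hc, card_filter_get_cast _ h, repList_count']
  set T : Finset (Fin (repList p).length) := Finset.univ.filter fun b => c b = j with hT
  have hTcard : T.card = q j := by rw [hT]; exact hcount j
  have hcond : (∀ a, (0:ℤ) ≤ ((fun a => (p a : ℤ)) a)) ∧ ∀ b, (0:ℤ) ≤ ((fun b => (q b : ℤ)) b) :=
    ⟨fun a => Int.natCast_nonneg _, fun b => Int.natCast_nonneg _⟩
  rw [Pperm, if_pos hcond]
  simp only [Int.toNat_natCast]
  rw [PpermNat_eq_permFun _ p q h, ← hr, ← hc, ← permanent_of_eq_permFun]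
  have hentry : (Matrix.of fun a b =>
        (B * (1 + Matrix.single i j (1 : R))) (r a) (c b))
      = Matrix.of fun a b => B (r a) (c b) + if b ∈ T then B (r a) i else 0 := by
    ext a b
    rw [Matrix.of_apply, Matrix.of_apply, mulT_apply]
    congr 1
    rw [hT]
    simp
  rw [hentry, perm_expand (fun a _ => B (r a) i) T (fun a b => B (r a) (c b))]
  have hterm : ∀ S ∈ T.powerset,
      permanent (Matrix.of fun a b =>
          if b ∈ S then (fun a (_ : Fin (repList p).length) => B (r a) i) a b
          else (fun a b => B (r a) (c b)) a b)
        = (fun k => PpermNat B p fun x =>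
            (if i = x then k else 0) + (if x = j then q j - k else q x)) S.card := by
    intro S hS
    have hSsub : S ⊆ T := Finset.mem_powerset.1 hS
    have e1 : (Matrix.of fun a b =>
          if b ∈ S then (fun a (_ : Fin (repList p).length) => B (r a) i) a b
          else (fun a b => B (r a) (c b)) a b)
        = Matrix.of fun a b => B (r a) ((fun b => if b ∈ S then i else c b) b) := by
      ext a b; by_cases hb : b ∈ S <;> simp [hb]
    rw [e1, hr, permanent_of_eq_permFun, permFun_eq_PpermNat]
    refine congrArg (PpermNat B p) (funext fun x => ?_)
    have hsplit : (Finset.univ.filter fun b => (if b ∈ S then i else c b) = x)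
        = (S.filter fun b => (if b ∈ S then i else c b) = x)
          ∪ ((Finset.univ \ S).filter fun b => (if b ∈ S then i else c b) = x) := by
      ext b; by_cases hb : b ∈ S <;> simp [hb]
    have c1 : (S.filter fun b => (if b ∈ S then i else c b) = x).card
        = if i = x then S.card else 0 := by
      have e2 : (S.filter fun b => (if b ∈ S then i else c b) = x)
          = S.filter fun _ => i = x := by
        apply Finset.filter_congr; intro b hb; simp [hb]
      rw [e2]
      by_cases hix : i = x
      · simp [hix]
      · simp [hix]
    have c2 : ((Finset.univ \ S).filter fun b => (if b ∈ S then i else c b) = x).card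
        = if x = j then q j - S.card else q x := by
      have e3 : ((Finset.univ \ S).filter fun b => (if b ∈ S then i else c b) = x)
          = (Finset.univ.filter fun b => c b = x) \ S := by
        ext b; by_cases hb : b ∈ S <;> simp [hb]
      rw [e3]
      by_cases hxj : x = j
      · subst hxj
        rw [if_pos rfl, Finset.card_sdiff_of_subset (by rw [← hT] at *; exact hSsub), hcount]
      · rw [if_neg hxj, Finset.sdiff_eq_self_iff_disjoint.2, hcount]
        rw [Finset.disjoint_left]
        intro b hb hbS
        have hbT := hSsub hbS
        rw [hT, Finset.mem_filter] at hbT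
        rw [Finset.mem_filter] at hb
        exact hxj (hb.2 ▸ hbT.2 ▸ rfl)
    rw [hsplit, Finset.card_union_of_disjoint
      (Finset.disjoint_filter_filter Finset.disjoint_sdiff), c1, c2]
  rw [Finset.sum_congr rfl hterm]
  refine Eq.trans (Finset.sum_powerset_apply_card
    (f := fun k => PpermNat B p fun x =>
      (if i = x then k else 0) + if x = j then q j - k else q x) (x := T)) ?_
  rw [hTcard]
  refine Finset.sum_congr rfl fun k hk => ?_
  have hk' : k ≤ q j := Nat.lt_succ_iff.1 (Finset.mem_range.1 hk)
  rw [nsmul_eq_mul]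
  congr 1
  rw [Pperm, if_pos ⟨fun a => Int.natCast_nonneg _, fun b => by
    by_cases hbi : b = i
    · subst hbi
      by_cases hbj : b = j <;> simp [hbj] <;> omega
    · by_cases hbj : b = j
      · subst hbj
        simp [hbi]
        omega
      · simp [hbi, hbj]⟩]
  simp only [Int.toNat_natCast]
  refine congrArg (PpermNat B p) (funext fun x => ?_)
  by_cases hxi : x = i
  · subst hxi
    by_cases hxj : x = j <;> simp [hxj] <;> omega
  · by_cases hxj : x = j
    · subst hxj
      have hij : ¬ i = x := fun hh => hxi hh.symm
      simp [hxi, hij]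
      omega
    · have hij : ¬ i = x := fun hh => hxi hh.symm
      simp [hxi, hxj, hij]
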